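/- arXiv:2012.12625 — 2 statements merged into one kernel-verified Lean document; each statement's English description precedes it below -/
import Mathlib

section
/- Suppose 0 ≤ T, 0 ≤ Φ, N ≥ K − ε with 0 < ε < K, and 0 ≤ P ≤ 1. Then f₁(T,N,Φ) = ρ T P (1 − (T+N+Φ)/K) − α T √(1−P²) − β₁ N T ≤ (ρ ε/K − β₁(K−ε)) T. -/
theorem stmt_9 (ρ α β₁ K ε : ℝ) (hρ : 0 < ρ) (hα : 0 < α) (hβ₁ : 0 < β₁)
    (hK : 0 < K) (hε : 0 < ε) (hεK : ε < K)
    (T N Φ P : ℝ) (hT : 0 ≤ T) (hΦ : 0 ≤ Φ) (hN : K - ε ≤ N)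
    (hP0 : 0 ≤ P) (hP1 : P ≤ 1) :
    ρ * T * P * (1 - (T + N + Φ) / K) - α * T * Real.sqrt (1 - P ^ 2) - β₁ * N * T ≤
      (ρ * ε / K - β₁ * (K - ε)) * T := by
  have hs : 0 ≤ Real.sqrt (1 - P ^ 2) := Real.sqrt_nonneg _
  have hsq : 0 ≤ α * T * Real.sqrt (1 - P ^ 2) := by positivity
  have hx : 1 - (T + N + Φ) / K ≤ ε / K := by
    rw [sub_le_iff_le_add, ← add_div, le_div_iff₀ hK]
    linarith
  have h1 : ρ * T * P * (1 - (T + N + Φ) / K) ≤ ρ * T * (ε / K) := by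
    rcases le_or_gt 0 (1 - (T + N + Φ) / K) with h | h
    · have hρT : 0 ≤ ρ * T := mul_nonneg hρ.le hT
      calc ρ * T * P * (1 - (T + N + Φ) / K)
          ≤ ρ * T * (1 - (T + N + Φ) / K) :=
            mul_le_mul_of_nonneg_right (mul_le_of_le_one_right hρT hP1) h
        _ ≤ ρ * T * (ε / K) := mul_le_mul_of_nonneg_left hx hρT
    · have : ρ * T * P * (1 - (T + N + Φ) / K) ≤ 0 := by
        apply mul_nonpos_of_nonneg_of_nonpos (by positivity) h.le
      have : 0 ≤ ρ * T * (ε / K) := by positivity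
      linarith
  have h2 : β₁ * (K - ε) * T ≤ β₁ * N * T := by
    nlinarith [mul_nonneg (mul_nonneg hβ₁.le hT) (by linarith : (0:ℝ) ≤ N - (K - ε))]
  have heq : ρ * T * (ε / K) = ρ * ε / K * T := by ring
  linarith
end

section
/- If δ ≥ γ/K and 0 ≤ T ≤ K, 0 ≤ Φ ≤ K, N ≥ N₀^min > 0, 0 ≤ P ≤ 1, then f₃(T,N,Φ) = γ T √(1−P²)(Φ/K)(1 − (T+N+Φ)/K) − δ T Φ − β₂ N Φ ≤ −β₂ N₀^min Φ. -/
theorem stmt_11 (γ δ β₂ K Nmin : ℝ) (hγ : 0 < γ) (hδ : 0 < δ) (hβ₂ : 0 < β₂)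
    (hK : 0 < K) (hδγ : γ / K ≤ δ) (hNmin : 0 < Nmin)
    (T N Φ P : ℝ) (hT : 0 ≤ T) (hTK : T ≤ K) (hΦ : 0 ≤ Φ) (hΦK : Φ ≤ K)
    (hN : Nmin ≤ N) (hP0 : 0 ≤ P) (hP1 : P ≤ 1) :
    γ * T * Real.sqrt (1 - P ^ 2) * (Φ / K) * (1 - (T + N + Φ) / K)
        - δ * T * Φ - β₂ * N * Φ ≤ -(β₂ * Nmin * Φ) := by
  set s := Real.sqrt (1 - P ^ 2) with hs
  have hs0 : 0 ≤ s := Real.sqrt_nonneg _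
  have hs1 : s ≤ 1 := Real.sqrt_le_one.mpr (by nlinarith)
  have hγK : γ ≤ δ * K := by
    have := (div_le_iff₀ hK).mp hδγ; linarith
  have key : γ * T * s * (Φ / K) * (1 - (T + N + Φ) / K) ≤ δ * T * Φ := by
    rcases le_or_gt (1 - (T + N + Φ) / K) 0 with h | h
    · have : γ * T * s * (Φ / K) * (1 - (T + N + Φ) / K) ≤ 0 :=
        mul_nonpos_of_nonneg_of_nonpos (by positivity) h
      nlinarith [mul_nonneg (mul_nonneg hδ.le hT) hΦ]
    · have h1 : 1 - (T + N + Φ) / K ≤ 1 := by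
        have hNpos : (0:ℝ) < N := lt_of_lt_of_le hNmin hN
        have : 0 ≤ (T + N + Φ) / K := by positivity
        linarith
      calc γ * T * s * (Φ / K) * (1 - (T + N + Φ) / K)
          ≤ γ * T * s * (Φ / K) * 1 := by
            apply mul_le_mul_of_nonneg_left h1 (by positivity)
        _ = γ * T * s * (Φ / K) := by ring
        _ ≤ γ * T * 1 * (Φ / K) := by
            apply mul_le_mul_of_nonneg_right (by nlinarith [mul_le_mul_of_nonneg_left hs1 (mul_nonneg hγ.le hT)]) (by positivity)
        _ ≤ δ * T * Φ := by
            have hΦK' : 0 ≤ Φ / K := by positivity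
            have hKΦ : δ * K * (T * (Φ / K)) = δ * T * Φ := by
              field_simp
            have := mul_le_mul_of_nonneg_right hγK (mul_nonneg hT hΦK')
            linarith [this.trans_eq (by linarith [hKΦ] <;> ring : δ * K * (T * (Φ / K)) = δ * T * Φ)]
  nlinarith [mul_le_mul_of_nonneg_left hN hβ₂.le]
end
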